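/- Let (Xₙ)ₙ≥1 be an MVPS(θ, ν, R): X₁ ∼ ν and P(X_{n+1} ∈ · | X₁,…,Xₙ) = (θν(·) + Σᵢ₌₁ⁿ R_{Xᵢ}(·)) / (θ + Σᵢ₌₁ⁿ R_{Xᵢ}(X)), where R is a signed transition kernel such that θν + Σᵢ₌₁ⁿ R_{Xᵢ} is almost surely a non-negative measure for all n. If (Xₙ) is exchangeable, then for every measurable set B, R_x(B) ≥ 0 for ν-almost every x. -/
import Mathlib
open MeasureTheory Finset

namespace MVPSaux

variable {Ω X : Type*} [MeasurableSpace Ω] [MeasurableSpace X]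

noncomputable def ind (D : Set X) : X → ℝ := D.indicator 1

lemma ind_meas {D : Set X} (hD : MeasurableSet D) : Measurable (ind D) :=
  measurable_const.indicator hD

lemma ind_nonneg (D : Set X) (x : X) : 0 ≤ ind D x := by
  by_cases h : x ∈ D <;> simp [ind, h]

lemma ind_le_one (D : Set X) (x : X) : ind D x ≤ 1 := by
  by_cases h : x ∈ D <;> simp [ind, h]

lemma ind_mul_self (D : Set X) (x : X) : ind D x * ind D x = ind D x := by
  by_cases h : x ∈ D <;> simp [ind, h]

lemma ind_eq_one {D : Set X} {x : X} (h : ind D x ≠ 0) : x ∈ D := by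
  by_contra hx; simp [ind, hx] at h

variable (P : Measure Ω) [IsProbabilityMeasure P] (Xseq : ℕ → Ω → X)

lemma integrable_of_abs_le {f : Ω → ℝ} (hf : Measurable f) (C : ℝ)
    (h : ∀ ω, |f ω| ≤ C) : Integrable f P :=
  (integrable_const C).mono' hf.aestronglyMeasurable (Filter.Eventually.of_forall h)

variable (hXmeas : ∀ n, Measurable (Xseq n))
  (hexch : ∀ n : ℕ, ∀ σ : Equiv.Perm (Fin n),
      Measure.map (fun ω (i : Fin n) => Xseq (σ i) ω) P
        = Measure.map (fun ω (i : Fin n) => Xseq i ω) P)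

include hXmeas in
lemma integral_perm (n : ℕ) (σ : Equiv.Perm (Fin n))
    (hex : Measure.map (fun ω (i : Fin n) => Xseq (σ i) ω) P
        = Measure.map (fun ω (i : Fin n) => Xseq i ω) P)
    (f : (Fin n → X) → ℝ) (hf : Measurable f) :
    ∫ ω, f (fun i => Xseq (σ i) ω) ∂P = ∫ ω, f (fun i => Xseq i ω) ∂P := by
  have h1 : Measurable fun ω (i : Fin n) => Xseq (σ i) ω :=
    measurable_pi_lambda _ (fun i => hXmeas _)
  have h2 : Measurable fun ω (i : Fin n) => Xseq i ω :=
    measurable_pi_lambda _ (fun i => hXmeas _)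
  rw [← integral_map h1.aemeasurable hf.aestronglyMeasurable, hex,
    integral_map h2.aemeasurable hf.aestronglyMeasurable]

end MVPSaux

namespace MVPSaux
set_option linter.unusedSectionVars false

variable {Ω X : Type*} [MeasurableSpace Ω] [MeasurableSpace X]
variable (P : Measure Ω) [IsProbabilityMeasure P] (Xseq : ℕ → Ω → X)

lemma factA (hXmeas : ∀ n, Measurable (Xseq n))
    (hexch : ∀ n : ℕ, ∀ σ : Equiv.Perm (Fin n),
      Measure.map (fun ω (i : Fin n) => Xseq (σ i) ω) P
        = Measure.map (fun ω (i : Fin n) => Xseq i ω) P)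
    {D : Set X} (hD : MeasurableSet D) (k j : ℕ) (hkj : k ≤ j) :
    ∫ ω, (∏ i ∈ range k, ind D (Xseq i ω)) * ind D (Xseq j ω) ∂P
      = ∫ ω, (∏ i ∈ range k, ind D (Xseq i ω)) * ind D (Xseq k ω) ∂P := by
  have hk : k < j + 1 := Nat.lt_succ_of_le hkj
  have hj : j < j + 1 := Nat.lt_succ_self j
  have hkn : k ≤ j + 1 := hk.le
  set n := j + 1 with hn
  set a : Fin n := ⟨k, hk⟩ with ha
  set b : Fin n := ⟨j, hj⟩ with hb
  set σ : Equiv.Perm (Fin n) := Equiv.swap a b with hσ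
  set f : (Fin n → X) → ℝ :=
    fun v => (∏ i : Fin k, ind D (v (Fin.castLE hkn i))) * ind D (v a) with hfdef
  have hf : Measurable f := by
    apply Measurable.mul
    · exact Finset.measurable_prod _ (fun i _ => (ind_meas hD).comp (measurable_pi_apply _))
    · exact (ind_meas hD).comp (measurable_pi_apply _)
  have key := integral_perm P Xseq hXmeas n σ (hexch n σ) f hf
  have hσa : σ a = b := Equiv.swap_apply_left a b
  have hσc : ∀ i : Fin k, σ (Fin.castLE hkn i) = Fin.castLE hkn i := by
    intro i
    refine Equiv.swap_apply_of_ne_of_ne (Fin.ne_of_val_ne ?_) (Fin.ne_of_val_ne ?_)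
    · simpa using Nat.ne_of_lt i.isLt
    · simpa using Nat.ne_of_lt (lt_of_lt_of_le i.isLt hkj)
  have l1 : (fun ω => f (fun i => Xseq (σ i) ω))
      = fun ω => (∏ i ∈ range k, ind D (Xseq i ω)) * ind D (Xseq j ω) := by
    funext ω
    simp only [hfdef, hσc, hσa, Fin.coe_castLE]
    rw [Fin.prod_univ_eq_prod_range (fun i => ind D (Xseq i ω)) k]
  have l2 : (fun ω => f (fun i => Xseq i ω))
      = fun ω => (∏ i ∈ range k, ind D (Xseq i ω)) * ind D (Xseq k ω) := by
    funext ω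
    simp only [hfdef, Fin.coe_castLE]
    rw [Fin.prod_univ_eq_prod_range (fun i => ind D (Xseq i ω)) k]
  rw [l1, l2] at key
  exact key

lemma factB (hXmeas : ∀ n, Measurable (Xseq n))
    (hexch : ∀ n : ℕ, ∀ σ : Equiv.Perm (Fin n),
      Measure.map (fun ω (i : Fin n) => Xseq (σ i) ω) P
        = Measure.map (fun ω (i : Fin n) => Xseq i ω) P)
    {D : Set X} (hD : MeasurableSet D) (k j j' : ℕ) (hkj : k ≤ j) (hjj : j < j') :
    ∫ ω, (∏ i ∈ range k, ind D (Xseq i ω)) * ind D (Xseq j ω) * ind D (Xseq j' ω) ∂P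
      = ∫ ω, (∏ i ∈ range k, ind D (Xseq i ω)) * ind D (Xseq k ω) * ind D (Xseq (k+1) ω) ∂P := by
  have hk : k < j' + 1 := by omega
  have hk1 : k + 1 < j' + 1 := by omega
  have hj : j < j' + 1 := by omega
  have hj' : j' < j' + 1 := Nat.lt_succ_self j'
  have hkn : k ≤ j' + 1 := hk.le
  set n := j' + 1 with hn
  set a : Fin n := ⟨k, hk⟩ with ha
  set a' : Fin n := ⟨k+1, hk1⟩ with ha'
  set b : Fin n := ⟨j, hj⟩ with hb
  set b' : Fin n := ⟨j', hj'⟩ with hb'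
  set σ : Equiv.Perm (Fin n) := Equiv.swap a b * Equiv.swap a' b' with hσ
  set f : (Fin n → X) → ℝ :=
    fun v => (∏ i : Fin k, ind D (v (Fin.castLE hkn i))) * ind D (v a) * ind D (v a') with hfdef
  have hf : Measurable f := by
    apply Measurable.mul
    apply Measurable.mul
    · exact Finset.measurable_prod _ (fun i _ => (ind_meas hD).comp (measurable_pi_apply _))
    · exact (ind_meas hD).comp (measurable_pi_apply _)
    · exact (ind_meas hD).comp (measurable_pi_apply _)
  have key := integral_perm P Xseq hXmeas n σ (hexch n σ) f hf
  have haa' : a ≠ a' := by simp only [ha, ha', ne_eq, Fin.mk.injEq]; omega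
  have hab' : a ≠ b' := by simp only [ha, hb', ne_eq, Fin.mk.injEq]; omega
  have hb'a : b' ≠ a := by simp only [ha, hb', ne_eq, Fin.mk.injEq]; omega
  have hb'b : b' ≠ b := by simp only [hb, hb', ne_eq, Fin.mk.injEq]; omega
  have hσa : σ a = b := by
    rw [hσ, Equiv.Perm.mul_apply, Equiv.swap_apply_of_ne_of_ne haa' hab',
      Equiv.swap_apply_left]
  have hσa' : σ a' = b' := by
    rw [hσ, Equiv.Perm.mul_apply, Equiv.swap_apply_left,
      Equiv.swap_apply_of_ne_of_ne hb'a hb'b]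
  have hσc : ∀ i : Fin k, σ (Fin.castLE hkn i) = Fin.castLE hkn i := by
    intro i
    have hik := i.isLt
    have h1 : Fin.castLE hkn i ≠ a' := by
      simp only [ha', ne_eq, Fin.ext_iff, Fin.coe_castLE, Fin.val_mk]; omega
    have h2 : Fin.castLE hkn i ≠ b' := by
      simp only [hb', ne_eq, Fin.ext_iff, Fin.coe_castLE, Fin.val_mk]; omega
    have h3 : Fin.castLE hkn i ≠ a := by
      simp only [ha, ne_eq, Fin.ext_iff, Fin.coe_castLE, Fin.val_mk]; omega
    have h4 : Fin.castLE hkn i ≠ b := by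
      simp only [hb, ne_eq, Fin.ext_iff, Fin.coe_castLE, Fin.val_mk]; omega
    rw [hσ, Equiv.Perm.mul_apply, Equiv.swap_apply_of_ne_of_ne h1 h2,
      Equiv.swap_apply_of_ne_of_ne h3 h4]
  have l1 : (fun ω => f (fun i => Xseq (σ i) ω))
      = fun ω => (∏ i ∈ range k, ind D (Xseq i ω)) * ind D (Xseq j ω) * ind D (Xseq j' ω) := by
    funext ω
    simp only [hfdef, hσc, hσa, hσa', Fin.coe_castLE]
    rw [Fin.prod_univ_eq_prod_range (fun i => ind D (Xseq i ω)) k]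
  have l2 : (fun ω => f (fun i => Xseq i ω))
      = fun ω => (∏ i ∈ range k, ind D (Xseq i ω)) * ind D (Xseq k ω) * ind D (Xseq (k+1) ω) := by
    funext ω
    simp only [hfdef, Fin.coe_castLE]
    rw [Fin.prod_univ_eq_prod_range (fun i => ind D (Xseq i ω)) k]
  rw [l1, l2] at key
  exact key

lemma prod_pos (hXmeas : ∀ n, Measurable (Xseq n))
    (hexch : ∀ n : ℕ, ∀ σ : Equiv.Perm (Fin n),
      Measure.map (fun ω (i : Fin n) => Xseq (σ i) ω) P
        = Measure.map (fun ω (i : Fin n) => Xseq i ω) P)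
    {D : Set X} (hD : MeasurableSet D)
    (h1 : 0 < ∫ ω, ∏ i ∈ range 1, ind D (Xseq i ω) ∂P) :
    ∀ n, 0 < ∫ ω, ∏ i ∈ range n, ind D (Xseq i ω) ∂P := by
  set m : ℕ → ℝ := fun k => ∫ ω, ∏ i ∈ range k, ind D (Xseq i ω) ∂P with hm
  have hUmeas : ∀ k, Measurable fun ω => ∏ i ∈ range k, ind D (Xseq i ω) :=
    fun k => Finset.measurable_prod _ fun i _ => (ind_meas hD).comp (hXmeas i)
  have hU0 : ∀ k ω, 0 ≤ ∏ i ∈ range k, ind D (Xseq i ω) :=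
    fun k ω => Finset.prod_nonneg fun i _ => ind_nonneg D _
  have hU1 : ∀ k ω, ∏ i ∈ range k, ind D (Xseq i ω) ≤ 1 :=
    fun k ω => Finset.prod_le_one (fun i _ => ind_nonneg D _) (fun i _ => ind_le_one D _)
  have hUint : ∀ k, Integrable (fun ω => ∏ i ∈ range k, ind D (Xseq i ω)) P := by
    intro k
    refine integrable_of_abs_le P (hUmeas k) 1 fun ω => ?_
    rw [abs_of_nonneg (hU0 k ω)]; exact hU1 k ω
  have hUYmeas : ∀ k j, Measurable fun ω =>
      (∏ i ∈ range k, ind D (Xseq i ω)) * ind D (Xseq j ω) :=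
    fun k j => (hUmeas k).mul ((ind_meas hD).comp (hXmeas j))
  have hUYint : ∀ k j, Integrable (fun ω =>
      (∏ i ∈ range k, ind D (Xseq i ω)) * ind D (Xseq j ω)) P := by
    intro k j
    refine integrable_of_abs_le P (hUYmeas k j) 1 fun ω => ?_
    rw [abs_of_nonneg (mul_nonneg (hU0 k ω) (ind_nonneg D _))]
    calc (∏ i ∈ range k, ind D (Xseq i ω)) * ind D (Xseq j ω)
        ≤ 1 * 1 := by
          apply mul_le_mul (hU1 k ω) (ind_le_one D _) (ind_nonneg D _) zero_le_one
      _ = 1 := by ring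
  have hUYYint : ∀ k j j', Integrable (fun ω =>
      (∏ i ∈ range k, ind D (Xseq i ω)) * ind D (Xseq j ω) * ind D (Xseq j' ω)) P := by
    intro k j j'
    refine integrable_of_abs_le P ((hUYmeas k j).mul ((ind_meas hD).comp (hXmeas j'))) 1
      fun ω => ?_
    rw [abs_of_nonneg (mul_nonneg (mul_nonneg (hU0 k ω) (ind_nonneg D _)) (ind_nonneg D _))]
    calc (∏ i ∈ range k, ind D (Xseq i ω)) * ind D (Xseq j ω) * ind D (Xseq j' ω)
        ≤ 1 * 1 := by
          apply mul_le_mul _ (ind_le_one D _) (ind_nonneg D _) zero_le_one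
          calc (∏ i ∈ range k, ind D (Xseq i ω)) * ind D (Xseq j ω) ≤ 1 * 1 := by
                apply mul_le_mul (hU1 k ω) (ind_le_one D _) (ind_nonneg D _) zero_le_one
            _ = 1 := by ring
      _ = 1 := by ring
  have hA : ∀ k j, k ≤ j →
      ∫ ω, (∏ i ∈ range k, ind D (Xseq i ω)) * ind D (Xseq j ω) ∂P = m (k+1) := by
    intro k j hkj
    rw [factA P Xseq hXmeas hexch hD k j hkj, hm]
    simp only [prod_range_succ]
  have hB : ∀ k j j', k ≤ j → j < j' →
      ∫ ω, (∏ i ∈ range k, ind D (Xseq i ω)) * ind D (Xseq j ω) * ind D (Xseq j' ω) ∂P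
        = m (k+2) := by
    intro k j j' hkj hjj
    rw [factB P Xseq hXmeas hexch hD k j j' hkj hjj, hm]
    simp only [prod_range_succ]
  have hmono : ∀ k, m (k+1) ≤ m k := by
    intro k
    apply integral_mono (hUint (k+1)) (hUint k)
    intro ω
    simp only [prod_range_succ]
    exact mul_le_of_le_one_right (hU0 k ω) (ind_le_one D _)
  have hm0 : ∀ k, 0 ≤ m k := fun k => integral_nonneg fun ω => hU0 k ω
  have step : ∀ k, 0 < m (k+1) → 0 < m (k+2) := by
    intro k hd
    have hc : 0 < m k := lt_of_lt_of_le hd (hmono k)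
    have key : ∀ n : ℕ, 1 ≤ n →
        (n:ℝ)^2 * (m (k+1))^2 * m k
          ≤ (m k)^2 * ((n:ℝ) * m (k+1) + (n:ℝ)*((n:ℝ)-1) * m (k+2)) := by
      intro n hn1
      set U : Ω → ℝ := fun ω => ∏ i ∈ range k, ind D (Xseq i ω) with hUdef
      set W : Ω → ℝ := fun ω => ∑ j ∈ range n, ind D (Xseq (k+j) ω) with hWdef
      have hW0 : ∀ ω, 0 ≤ W ω := fun ω => Finset.sum_nonneg fun j _ => ind_nonneg D _
      have hWn : ∀ ω, W ω ≤ n := by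
        intro ω
        calc W ω ≤ ∑ _j ∈ range n, (1:ℝ) :=
              Finset.sum_le_sum fun j _ => ind_le_one D _
          _ = n := by rw [Finset.sum_const, card_range, nsmul_eq_mul, mul_one]
      have hWmeas : Measurable W :=
        Finset.measurable_sum _ fun j _ => (ind_meas hD).comp (hXmeas _)
      have hintUW : Integrable (fun ω => U ω * W ω) P := by
        refine integrable_of_abs_le P ((hUmeas k).mul hWmeas) n fun ω => ?_
        rw [abs_of_nonneg (mul_nonneg (hU0 k ω) (hW0 ω))]
        calc U ω * W ω ≤ 1 * W ω :=
              mul_le_mul_of_nonneg_right (hU1 k ω) (hW0 ω)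
          _ = W ω := one_mul _
          _ ≤ n := hWn ω
      have hintUW2 : Integrable (fun ω => U ω * W ω^2) P := by
        refine integrable_of_abs_le P ((hUmeas k).mul (hWmeas.pow_const 2)) ((n:ℝ)^2)
          fun ω => ?_
        rw [abs_of_nonneg (mul_nonneg (hU0 k ω) (sq_nonneg _))]
        calc U ω * W ω^2 ≤ 1 * W ω^2 :=
              mul_le_mul_of_nonneg_right (hU1 k ω) (sq_nonneg _)
          _ = W ω^2 := one_mul _
          _ ≤ (n:ℝ)^2 := by
              apply pow_le_pow_left₀ (hW0 ω) (hWn ω)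
      have h_IUW : ∫ ω, U ω * W ω ∂P = (n:ℝ) * m (k+1) := by
        have hpt : (fun ω => U ω * W ω)
            = fun ω => ∑ j ∈ range n, U ω * ind D (Xseq (k+j) ω) := by
          funext ω; exact Finset.mul_sum _ _ _
        rw [hpt, integral_finset_sum _ (fun j _ => hUYint k (k+j)),
          Finset.sum_congr rfl (fun j _ => hA k (k+j) (Nat.le_add_right k j)),
          Finset.sum_const, card_range, nsmul_eq_mul]
      have hA' : ∀ j, k ≤ j → ∫ ω, U ω * ind D (Xseq j ω) ∂P = m (k+1) :=
        fun j hj => hA k j hj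
      have hB'' : ∀ j j', k ≤ j → j < j' →
          ∫ ω, U ω * ind D (Xseq j ω) * ind D (Xseq j' ω) ∂P = m (k+2) :=
        fun j j' hj hjj => hB k j j' hj hjj
      have hUYint' : ∀ j, Integrable (fun ω => U ω * ind D (Xseq j ω)) P :=
        fun j => hUYint k j
      have hUYYint' : ∀ j j', Integrable
          (fun ω => U ω * ind D (Xseq j ω) * ind D (Xseq j' ω)) P :=
        fun j j' => hUYYint k j j'
      have h_IUW2 : ∫ ω, U ω * W ω^2 ∂P
          = (n:ℝ) * (m (k+1) + ((n:ℝ)-1) * m (k+2)) := by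
        have hpt : (fun ω => U ω * W ω^2)
            = fun ω => ∑ j ∈ range n, ∑ j' ∈ range n,
                U ω * ind D (Xseq (k+j) ω) * ind D (Xseq (k+j') ω) := by
          funext ω
          rw [sq, hWdef, Finset.sum_mul_sum, Finset.mul_sum]
          refine Finset.sum_congr rfl fun j _ => ?_
          rw [Finset.mul_sum]
          refine Finset.sum_congr rfl fun j' _ => ?_
          ring
        rw [hpt, integral_finset_sum _
          (fun j _ => integrable_finset_sum _ (fun j' _ => hUYYint' (k+j) (k+j')))]
        have hinner : ∀ j ∈ range n,
            ∫ ω, ∑ j' ∈ range n,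
              U ω * ind D (Xseq (k+j) ω) * ind D (Xseq (k+j') ω) ∂P
            = m (k+1) + ((n:ℝ)-1) * m (k+2) := by
          intro j hj
          rw [integral_finset_sum _ (fun j' _ => hUYYint' (k+j) (k+j'))]
          rw [← Finset.add_sum_erase (range n)
            (fun j' => ∫ ω, U ω * ind D (Xseq (k+j) ω) * ind D (Xseq (k+j') ω) ∂P) hj]
          have hoff : ∀ j' ∈ (range n).erase j,
              ∫ ω, U ω * ind D (Xseq (k+j) ω) * ind D (Xseq (k+j') ω) ∂P = m (k+2) := by
            intro j' hj'
            have hne : j' ≠ j := (Finset.mem_erase.mp hj').1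
            rcases lt_or_gt_of_ne hne with h | h
            · have hcomm : (fun ω => U ω * ind D (Xseq (k+j) ω) * ind D (Xseq (k+j') ω))
                  = fun ω => U ω * ind D (Xseq (k+j') ω) * ind D (Xseq (k+j) ω) := by
                funext ω; ring
              rw [hcomm]
              exact hB'' (k+j') (k+j) (Nat.le_add_right _ _) (by omega)
            · exact hB'' (k+j) (k+j') (Nat.le_add_right _ _) (by omega)
          have hdiag : ∫ ω, U ω * ind D (Xseq (k+j) ω) * ind D (Xseq (k+j) ω) ∂P
              = m (k+1) := by
            have hd2 : (fun ω => U ω * ind D (Xseq (k+j) ω) * ind D (Xseq (k+j) ω))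
                = fun ω => U ω * ind D (Xseq (k+j) ω) := by
              funext ω; rw [mul_assoc, ind_mul_self]
            rw [hd2]
            exact hA' (k+j) (Nat.le_add_right _ _)
          rw [hdiag, Finset.sum_congr rfl hoff, Finset.sum_const,
            card_erase_of_mem hj, card_range, nsmul_eq_mul, Nat.cast_sub hn1,
            Nat.cast_one]
        rw [Finset.sum_congr rfl hinner, Finset.sum_const, card_range, nsmul_eq_mul]
      have h_IU : ∫ ω, U ω ∂P = m k := by
        simp only [hUdef, hm]
      have hintU : Integrable U P := hUint k
      have hnn : 0 ≤ ∫ ω, U ω * (m k * W ω - (n:ℝ) * m (k+1))^2 ∂P :=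
        integral_nonneg fun ω => mul_nonneg (hU0 k ω) (sq_nonneg _)
      have hexp : (fun ω => U ω * (m k * W ω - (n:ℝ) * m (k+1))^2)
          = fun ω => ((m k)^2 * (U ω * W ω^2)
              - (2 * m k * ((n:ℝ) * m (k+1))) * (U ω * W ω))
              + ((n:ℝ) * m (k+1))^2 * U ω := by
        funext ω; ring
      have hI2 : Integrable (fun ω => (m k)^2 * (U ω * W ω^2)) P := hintUW2.const_mul _
      have hI1 : Integrable (fun ω => (2 * m k * ((n:ℝ) * m (k+1))) * (U ω * W ω)) P :=
        hintUW.const_mul _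
      have hI0 : Integrable (fun ω => ((n:ℝ) * m (k+1))^2 * U ω) P := hintU.const_mul _
      have hI21 : Integrable (fun ω => (m k)^2 * (U ω * W ω^2)
          - (2 * m k * ((n:ℝ) * m (k+1))) * (U ω * W ω)) P := hI2.sub hI1
      rw [hexp, integral_add hI21 hI0, integral_sub hI2 hI1,
        integral_const_mul, integral_const_mul, integral_const_mul,
        h_IUW, h_IUW2, h_IU] at hnn
      nlinarith [hnn]
    -- use key with a large n
    obtain ⟨n, hn⟩ := exists_nat_gt (m k / m (k+1))
    have hrat : (1:ℝ) ≤ m k / m (k+1) := (one_le_div hd).mpr (hmono k)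
    have hn1R : (1:ℝ) < (n:ℝ) := lt_of_le_of_lt hrat hn
    have hn1 : 1 ≤ n := by exact_mod_cast hn1R.le
    have hcd : m k < (n:ℝ) * m (k+1) := by
      rw [div_lt_iff₀ hd] at hn; linarith
    have K := key n hn1
    by_contra he
    push_neg at he
    have hnpos : (0:ℝ) < (n:ℝ) := by linarith
    have h3 : (m k)^2 * ((n:ℝ)*((n:ℝ)-1) * m (k+2)) ≤ 0 := by
      apply mul_nonpos_of_nonneg_of_nonpos (sq_nonneg _)
      apply mul_nonpos_of_nonneg_of_nonpos
      · nlinarith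
      · exact he
    have h2 : m k * (m k * ((n:ℝ) * m (k+1)))
        < ((n:ℝ) * m (k+1)) * (m k * ((n:ℝ) * m (k+1))) := by
      apply mul_lt_mul_of_pos_right hcd
      positivity
    nlinarith [K, h2, h3]
  -- conclude
  have hge1 : ∀ n, 1 ≤ n → 0 < m n := by
    refine Nat.le_induction h1 ?_
    intro n hn hpos
    obtain ⟨j, rfl⟩ : ∃ j, n = j + 1 := ⟨n - 1, by omega⟩
    exact step j hpos
  intro n
  rcases Nat.eq_zero_or_pos n with rfl | hn
  · have : m 0 = 1 := by
      simp only [hm, range_zero, prod_empty]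
      simp
    rw [show (∫ ω, ∏ i ∈ range 0, ind D (Xseq i ω) ∂P) = m 0 from rfl, this]
    norm_num
  · exact hge1 n hn

end MVPSaux

open MVPSaux in
/-- For an exchangeable MVPS whose reinforcement is a signed transition kernel `R`
subject to the tenability condition (the urn content `θν + Σᵢ R_{Xᵢ}` is a.s. a
non-negative measure), the reinforcement is in fact non-negative:
for every measurable `B`, `R_x(B) ≥ 0` for `ν`-a.e. `x`. -/
theorem exchangeable_mvps_signed_reinforcement_nonneg
    {Ω X : Type*} [MeasurableSpace Ω] [MeasurableSpace X] [StandardBorelSpace X]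
    (P : Measure Ω) [IsProbabilityMeasure P]
    (ν : Measure X) [IsProbabilityMeasure ν]
    (θ : ℝ) (hθ : 0 < θ)
    (R : X → SignedMeasure X)
    (hRmeas : ∀ A : Set X, MeasurableSet A → Measurable fun x => R x A)
    (Xseq : ℕ → Ω → X) (hXmeas : ∀ n, Measurable (Xseq n))
    -- X₁ ∼ ν
    (hinit : Measure.map (Xseq 0) P = ν)
    -- predictive distributions of the MVPS, in integrated (test-set) form
    (hpred : ∀ n : ℕ, ∀ A : Set X, MeasurableSet A →
      ∀ S : Set (Fin n → X), MeasurableSet S →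
      ∫ ω, Set.indicator A (fun _ => (1 : ℝ)) (Xseq n ω) *
          Set.indicator S (fun _ => (1 : ℝ)) (fun i : Fin n => Xseq i ω) ∂P
        = ∫ ω, ((θ * (ν A).toReal + ∑ i ∈ range n, R (Xseq i ω) A) /
              (θ + ∑ i ∈ range n, R (Xseq i ω) Set.univ)) *
            Set.indicator S (fun _ => (1 : ℝ)) (fun i : Fin n => Xseq i ω) ∂P)
    -- tenability: θν + Σᵢ R_{Xᵢ} is almost surely a non-negative measure
    (htenable : ∀ n : ℕ, ∀ᵐ ω ∂P, ∀ A : Set X, MeasurableSet A →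
      0 ≤ θ * (ν A).toReal + ∑ i ∈ range n, R (Xseq i ω) A)
    -- exchangeability
    (hexch : ∀ n : ℕ, ∀ σ : Equiv.Perm (Fin n),
      Measure.map (fun ω (i : Fin n) => Xseq (σ i) ω) P
        = Measure.map (fun ω (i : Fin n) => Xseq i ω) P) :
    ∀ B : Set X, MeasurableSet B → ∀ᵐ x ∂ν, 0 ≤ R x B := by
  intro B hB
  rw [MeasureTheory.ae_iff]
  set D : ℕ → Set X := fun q => {x | R x B ≤ -(1/((q:ℝ)+1))} with hDdef
  have hDmeas : ∀ q, MeasurableSet (D q) :=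
    fun q => measurableSet_le (hRmeas B hB) measurable_const
  have hsub : {x | ¬ 0 ≤ R x B} ⊆ ⋃ q, D q := by
    intro x hx
    simp only [Set.mem_setOf_eq, not_le] at hx
    obtain ⟨q, hq⟩ := exists_nat_one_div_lt (show (0:ℝ) < -(R x B) by linarith)
    refine Set.mem_iUnion.mpr ⟨q, ?_⟩
    simp only [hDdef, Set.mem_setOf_eq]
    linarith
  refine measure_mono_null hsub (measure_iUnion_null fun q => ?_)
  by_contra hq0
  set ε : ℝ := 1/((q:ℝ)+1) with hεdef
  have hε : 0 < ε := by positivity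
  have hm1 : 0 < ∫ ω, ∏ i ∈ range 1, ind (D q) (Xseq i ω) ∂P := by
    have heq : ∫ ω, ∏ i ∈ range 1, ind (D q) (Xseq i ω) ∂P = (ν (D q)).toReal := by
      simp only [prod_range_one]
      rw [show (fun ω => ind (D q) (Xseq 0 ω)) = fun ω => ind (D q) (Xseq 0 ω) from rfl]
      rw [← integral_map (hXmeas 0).aemeasurable
        ((ind_meas (hDmeas q)).aestronglyMeasurable), hinit]
      exact integral_indicator_one (hDmeas q)
    rw [heq]
    exact ENNReal.toReal_pos hq0 (measure_ne_top ν _)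
  have hpos := prod_pos P Xseq hXmeas hexch (hDmeas q) hm1
  obtain ⟨n, hn⟩ := exists_nat_gt (θ * (ν B).toReal / ε)
  have hzero : ∀ᵐ ω ∂P, (∏ i ∈ range n, ind (D q) (Xseq i ω)) = 0 := by
    filter_upwards [htenable n] with ω hω
    by_contra hne
    have hmem : ∀ i ∈ range n, Xseq i ω ∈ D q :=
      fun i hi => ind_eq_one (Finset.prod_ne_zero_iff.mp hne i hi)
    have hsum : ∑ i ∈ range n, R (Xseq i ω) B ≤ (n:ℝ) * (-ε) := by
      calc ∑ i ∈ range n, R (Xseq i ω) B ≤ ∑ _i ∈ range n, (-ε) := by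
            refine Finset.sum_le_sum fun i hi => ?_
            have := hmem i hi
            simp only [hDdef, Set.mem_setOf_eq] at this
            linarith
        _ = (n:ℝ) * (-ε) := by rw [Finset.sum_const, card_range, nsmul_eq_mul]
    have h0 := hω B hB
    have hlt : θ * (ν B).toReal < (n:ℝ) * ε := by
      rw [div_lt_iff₀ hε] at hn
      linarith
    linarith
  have hz : ∫ ω, ∏ i ∈ range n, ind (D q) (Xseq i ω) ∂P = 0 :=
    integral_eq_zero_of_ae hzero
  linarith [hpos n]
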